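/- The function Q(t) = (e^{-αt} - e^{-βt})/(1 - e^{-t}) for t ≠ 0, with Q(0) = β - α, where β > α and β - α ≠ 1, is neither 4-log-convex nor 4-log-concave on (0, ∞); that is, the fourth derivative of ln Q changes sign on (0, ∞). -/

import Mathlib

open Real Filter Set Topology

noncomputable section
def ga1 (s : ℝ) : ℝ := exp (-s) / (1 - exp (-s))
def ga2 (s : ℝ) : ℝ := -exp (-s) / (1 - exp (-s))^2
def ga3 (s : ℝ) : ℝ := (exp (-s) + exp (-s)^2) / (1 - exp (-s))^3
def ga4 (s : ℝ) : ℝ := -(exp (-s) + 4*exp (-s)^2 + exp (-s)^3) / (1 - exp (-s))^4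

lemma one_sub_exp_ne (s : ℝ) (hs : s ≠ 0) : 1 - exp (-s) ≠ 0 := by
  rw [sub_ne_zero]
  intro h
  rw [eq_comm, Real.exp_eq_one_iff] at h
  exact hs (by linarith [h] )

lemma hasDerivAt_exp_neg (s : ℝ) : HasDerivAt (fun s : ℝ => exp (-s)) (-exp (-s)) s := by
  simpa using (hasDerivAt_neg s).exp

lemma hasDerivAt_onesub (s : ℝ) : HasDerivAt (fun s : ℝ => 1 - exp (-s)) (exp (-s)) s := by
  simpa using (hasDerivAt_exp_neg s).const_sub (1:ℝ)

lemma hd0 (s : ℝ) (hs : s ≠ 0) :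
    HasDerivAt (fun s : ℝ => log (1 - exp (-s))) (ga1 s) s := by
  simpa [ga1] using (hasDerivAt_onesub s).log (one_sub_exp_ne s hs)

lemma hd1 (s : ℝ) (hs : s ≠ 0) : HasDerivAt ga1 (ga2 s) s := by
  have h := (hasDerivAt_exp_neg s).div (hasDerivAt_onesub s) (one_sub_exp_ne s hs)
  refine h.congr_deriv ?_
  have := one_sub_exp_ne s hs
  simp only [ga2, Pi.pow_apply, Pi.neg_apply, Pi.add_apply, Nat.cast_ofNat, Nat.reduceSub, pow_one]
  field_simp [ga2]
  ring

lemma hd2 (s : ℝ) (hs : s ≠ 0) : HasDerivAt ga2 (ga3 s) s := by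
  have h := ((hasDerivAt_exp_neg s).neg).div ((hasDerivAt_onesub s).pow 2) 
    (pow_ne_zero 2 (one_sub_exp_ne s hs))
  refine h.congr_deriv ?_
  have := one_sub_exp_ne s hs
  simp only [ga3, Pi.pow_apply, Pi.neg_apply, Pi.add_apply, Nat.cast_ofNat, Nat.reduceSub, pow_one]
  field_simp [ga3]
  ring

lemma hd3 (s : ℝ) (hs : s ≠ 0) : HasDerivAt ga3 (ga4 s) s := by
  have h := ((hasDerivAt_exp_neg s).add ((hasDerivAt_exp_neg s).pow 2)).div 
    ((hasDerivAt_onesub s).pow 3) (pow_ne_zero 3 (one_sub_exp_ne s hs))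
  refine h.congr_deriv ?_
  have := one_sub_exp_ne s hs
  simp only [ga4, Pi.pow_apply, Pi.neg_apply, Pi.add_apply, Nat.cast_ofNat, Nat.reduceSub, pow_one]
  field_simp [ga4]
  ring
end

noncomputable section
def G0 (a c : ℝ) (t : ℝ) : ℝ := -(a*t) + log (1 - exp (-(c*t))) - log (1 - exp (-t))
def G1 (a c : ℝ) (t : ℝ) : ℝ := -a + c * ga1 (c*t) - ga1 t
def G2 (c : ℝ) (t : ℝ) : ℝ := c^2 * ga2 (c*t) - ga2 t
def G3 (c : ℝ) (t : ℝ) : ℝ := c^3 * ga3 (c*t) - ga3 t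
def G4 (c : ℝ) (t : ℝ) : ℝ := c^4 * ga4 (c*t) - ga4 t

lemma comp_c {f f' : ℝ → ℝ} (c s : ℝ) (h : HasDerivAt f (f' (c*s)) (c*s)) :
    HasDerivAt (fun t => f (c*t)) (c * f' (c*s)) s := by
  exact (h.comp s ((hasDerivAt_id s).const_mul c)).congr_deriv (by simp [mul_comm])

lemma hG0 (a c s : ℝ) (hc : c ≠ 0) (hs : s ≠ 0) : HasDerivAt (G0 a c) (G1 a c s) s := by
  have h1 : HasDerivAt (fun t : ℝ => log (1 - exp (-(c*t)))) (c * ga1 (c*s)) s :=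
    comp_c c s (hd0 (c*s) (mul_ne_zero hc hs))
  have h2 := hd0 s hs
  have h3 : HasDerivAt (fun t : ℝ => -(a*t)) (-a) s := by
    simpa [neg_mul] using (hasDerivAt_id s).const_mul (-a)
  unfold G0 G1
  exact (h3.add h1).sub h2

lemma hG1 (a c s : ℝ) (hc : c ≠ 0) (hs : s ≠ 0) : HasDerivAt (G1 a c) (G2 c s) s := by
  have h1 : HasDerivAt (fun t : ℝ => ga1 (c*t)) (c * ga2 (c*s)) s :=
    comp_c c s (hd1 (c*s) (mul_ne_zero hc hs))
  unfold G1 G2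
  rw [show c^2 * ga2 (c*s) - ga2 s = 0 + c*(c * ga2 (c*s)) - ga2 s by ring]
  exact ((hasDerivAt_const s (-a)).add ((comp_c c s (hd1 (c*s) (mul_ne_zero hc hs))).const_mul c)).sub (hd1 s hs)

lemma hG2 (c s : ℝ) (hc : c ≠ 0) (hs : s ≠ 0) : HasDerivAt (G2 c) (G3 c s) s := by
  have h1 : HasDerivAt (fun t : ℝ => ga2 (c*t)) (c * ga3 (c*s)) s :=
    comp_c c s (hd2 (c*s) (mul_ne_zero hc hs))
  unfold G2 G3
  rw [show c^3 * ga3 (c*s) - ga3 s = c^2*(c * ga3 (c*s)) - ga3 s by ring]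
  exact (h1.const_mul (c^2)).sub (hd2 s hs)

lemma hG3 (c s : ℝ) (hc : c ≠ 0) (hs : s ≠ 0) : HasDerivAt (G3 c) (G4 c s) s := by
  have h1 : HasDerivAt (fun t : ℝ => ga3 (c*t)) (c * ga4 (c*s)) s :=
    comp_c c s (hd3 (c*s) (mul_ne_zero hc hs))
  unfold G3 G4
  rw [show c^4 * ga4 (c*s) - ga4 s = c^3*(c * ga4 (c*s)) - ga4 s by ring]
  exact (h1.const_mul (c^3)).sub (hd3 s hs)

lemma step {f0 fa fb : ℝ → ℝ} {n : ℕ}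
    (ha : ∀ s : ℝ, s ≠ 0 → iteratedDeriv n f0 s = fa s)
    (hb : ∀ s : ℝ, s ≠ 0 → HasDerivAt fa (fb s) s) :
    ∀ s : ℝ, s ≠ 0 → iteratedDeriv (n+1) f0 s = fb s := by
  intro s hs
  rw [iteratedDeriv_succ]
  have hev : iteratedDeriv n f0 =ᶠ[𝓝 s] fa :=
    eventually_of_mem (isOpen_compl_singleton.mem_nhds hs) (fun x hx => ha x hx)
  rw [hev.deriv_eq]
  exact (hb s hs).deriv

lemma iter4 (a c : ℝ) (hc : c ≠ 0) (t : ℝ) (ht : t ≠ 0) :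
    iteratedDeriv 4 (G0 a c) t = G4 c t := by
  have s0 : ∀ s : ℝ, s ≠ 0 → iteratedDeriv 0 (G0 a c) s = G0 a c s := by simp
  have s1 := step s0 (fun s hs => hG0 a c s hc hs)
  have s2 := step s1 (fun s hs => hG1 a c s hc hs)
  have s3 := step s2 (fun s hs => hG2 c s hc hs)
  have s4 := step s3 (fun s hs => hG3 c s hc hs)
  exact s4 t ht
end
noncomputable section
def T9 (x : ℝ) : ℝ := 1 + x + x^2/2 + x^3/6 + x^4/24 + x^5/120 + x^6/720 + x^7/5040 + x^8/40320

lemma expApprox (x : ℝ) (h : |x| ≤ 1) : |exp x - T9 x| ≤ |x|^9 := by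
  have h9 := Real.exp_bound h (n := 9) (by norm_num)
  have hsum : ∑ i ∈ Finset.range 9, x^i / (Nat.factorial i : ℝ) = T9 x := by
    simp [Finset.sum_range_succ, Nat.factorial, T9]
  rw [hsum] at h9
  refine h9.trans ?_
  rw [show ((Nat.succ 9 : ℕ) : ℝ) / ((Nat.factorial 9 : ℕ) * (9:ℕ)) = 10/3265920 by norm_num [Nat.factorial]]
  nlinarith [abs_nonneg x, pow_nonneg (abs_nonneg x) 9]
end

noncomputable section
def Mf (t : ℝ) : ℝ := t^4*(exp (-t) + 4*exp (-t)^2 + exp (-t)^3) - (6 + t^4/120)*(1 - exp (-t))^4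

set_option maxHeartbeats 2000000 in
lemma M_bound (t : ℝ) (ht : 0 < t) (ht4 : t ≤ 1/4) : |Mf t| ≤ 3000000 * t^9 := by
  have pe2 : exp (-t)^2 = exp (-(2*t)) := by
    rw [sq, ← Real.exp_add]; ring_nf
  have pe3 : exp (-t)^3 = exp (-(3*t)) := by
    rw [pow_succ, pe2, ← Real.exp_add]; ring_nf
  have pe4 : exp (-t)^4 = exp (-(4*t)) := by
    rw [pow_succ, pe3, ← Real.exp_add]; ring_nf
  set a1 := exp (-t) - T9 (-t) with ha1
  set a2 := exp (-(2*t)) - T9 (-(2*t)) with ha2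
  set a3 := exp (-(3*t)) - T9 (-(3*t)) with ha3
  set a4 := exp (-(4*t)) - T9 (-(4*t)) with ha4
  have habs : ∀ b : ℝ, 0 < b → b*t ≤ 1 → |exp (-(b*t)) - T9 (-(b*t))| ≤ b^9 * t^9 := by
    intro b hb hbt
    have hbt0 : 0 < b*t := mul_pos hb ht
    have h := expApprox (-(b*t)) (by rw [abs_neg, abs_of_pos hbt0]; exact hbt)
    have e : |(-(b*t))|^9 = b^9*t^9 := by rw [abs_neg, abs_of_pos hbt0, mul_pow]
    rwa [e] at h
  have h1 := habs 1 (by norm_num) (by linarith)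
  have h2 := habs 2 (by norm_num) (by linarith)
  have h3 := habs 3 (by norm_num) (by linarith)
  have h4 := habs 4 (by norm_num) (by linarith)
  norm_num at h1 h2 h3 h4
  have e1 : exp (-t) = T9 (-t) + a1 := by rw [ha1]; ring
  have e2 : exp (-(2*t)) = T9 (-(2*t)) + a2 := by rw [ha2]; ring
  have e3 : exp (-(3*t)) = T9 (-(3*t)) + a3 := by rw [ha3]; ring
  have e4 : exp (-(4*t)) = T9 (-(4*t)) + a4 := by rw [ha4]; ring
  have key : Mf t = t^9 * (-37/12 + 973/720*t - 263/504*t^2 + 36229/201600*t^3)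
      + (t^4*(a1 + 4*a2 + a3) - (6 + t^4/120)*(-4*a1 + 6*a2 - 4*a3 + a4)) := by
    have expand : (1 - exp (-t))^4 = 1 - 4*exp (-t) + 6*exp (-t)^2 - 4*exp (-t)^3 + exp (-t)^4 := by
      ring
    rw [Mf, expand, pe2, pe3, pe4, e1, e2, e3, e4, T9, T9, T9, T9]
    ring
  rw [← ha1] at h1
  rw [← ha2] at h2
  rw [← ha3] at h3
  rw [← ha4] at h4
  clear_value a1 a2 a3 a4
  clear ha1 ha2 ha3 ha4 pe2 pe3 pe4 habs
  obtain ⟨h1l, h1r⟩ := abs_le.mp h1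
  obtain ⟨h2l, h2r⟩ := abs_le.mp h2
  obtain ⟨h3l, h3r⟩ := abs_le.mp h3
  obtain ⟨h4l, h4r⟩ := abs_le.mp h4
  have hta : (0:ℝ) < t^4 := by positivity
  have ht9 : (0:ℝ) < t^9 := by positivity
  have ht41 : t^4 ≤ 1 := pow_le_one₀ ht.le (by linarith)
  have hc : (0:ℝ) < 6 + t^4/120 ∧ 6 + t^4/120 ≤ 7 := ⟨by linarith, by linarith⟩
  have m1 := mul_nonneg hta.le (by linarith : (0:ℝ) ≤ t^9 - a1)
  have m1' := mul_nonneg hta.le (by linarith : (0:ℝ) ≤ t^9 + a1)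
  have m2 := mul_nonneg hta.le (by linarith : (0:ℝ) ≤ 512*t^9 - a2)
  have m2' := mul_nonneg hta.le (by linarith : (0:ℝ) ≤ 512*t^9 + a2)
  have m3 := mul_nonneg hta.le (by linarith : (0:ℝ) ≤ 19683*t^9 - a3)
  have m3' := mul_nonneg hta.le (by linarith : (0:ℝ) ≤ 19683*t^9 + a3)
  have n1 := mul_nonneg hc.1.le (by linarith : (0:ℝ) ≤ t^9 - a1)
  have n1' := mul_nonneg hc.1.le (by linarith : (0:ℝ) ≤ t^9 + a1)
  have n2 := mul_nonneg hc.1.le (by linarith : (0:ℝ) ≤ 512*t^9 - a2)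
  have n2' := mul_nonneg hc.1.le (by linarith : (0:ℝ) ≤ 512*t^9 + a2)
  have n3 := mul_nonneg hc.1.le (by linarith : (0:ℝ) ≤ 19683*t^9 - a3)
  have n3' := mul_nonneg hc.1.le (by linarith : (0:ℝ) ≤ 19683*t^9 + a3)
  have n4 := mul_nonneg hc.1.le (by linarith : (0:ℝ) ≤ 262144*t^9 - a4)
  have n4' := mul_nonneg hc.1.le (by linarith : (0:ℝ) ≤ 262144*t^9 + a4)
  have q1 := mul_nonneg (by linarith : (0:ℝ) ≤ 1 - t^4) ht9.le
  have q1' := mul_nonneg (by linarith : (0:ℝ) ≤ 7 - (6 + t^4/120)) ht9.le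
  have ht21 : t^2 ≤ 1 := pow_le_one₀ ht.le (by linarith)
  have ht31 : t^3 ≤ 1 := pow_le_one₀ ht.le (by linarith)
  have p10 : 0 ≤ t^9 * t ∧ t^9 * t ≤ t^9 := 
    ⟨by positivity, by
      calc t^9 * t ≤ t^9 * 1 := mul_le_mul_of_nonneg_left (by linarith) ht9.le
        _ = t^9 := mul_one _⟩
  have p11 : 0 ≤ t^9 * t^2 ∧ t^9 * t^2 ≤ t^9 := 
    ⟨by positivity, by
      calc t^9 * t^2 ≤ t^9 * 1 := mul_le_mul_of_nonneg_left ht21 ht9.le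
        _ = t^9 := mul_one _⟩
  have p12 : 0 ≤ t^9 * t^3 ∧ t^9 * t^3 ≤ t^9 := 
    ⟨by positivity, by
      calc t^9 * t^3 ≤ t^9 * 1 := mul_le_mul_of_nonneg_left ht31 ht9.le
        _ = t^9 := mul_one _⟩
  clear e1 e2 e3 e4 h1 h2 h3 h4
  rw [key, abs_le]
  clear key
  constructor <;> linarith [p10.1, p10.2, p11.1, p11.2, p12.1, p12.2, m1, m1', m2, m2', m3, m3', n1, n1', n2, n2', n3, n3', n4, n4', q1, q1']
end

noncomputable section
def phi4 (s : ℝ) : ℝ := (exp (-s) + 4*exp (-s)^2 + exp (-s)^3) / (1 - exp (-s))^4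

lemma one_sub_exp_ne' (s : ℝ) (hs : s ≠ 0) : 1 - exp (-s) ≠ 0 := by
  rw [sub_ne_zero]
  intro h
  rw [eq_comm, Real.exp_eq_one_iff] at h
  exact hs (by linarith)

lemma Ef_eq (t : ℝ) (ht : 0 < t) :
    phi4 t - 6/t^4 - 1/120 = Mf t / (t^4 * (1 - exp (-t))^4) := by
  have hne := one_sub_exp_ne' t ht.ne'
  rw [phi4, Mf]
  field_simp
  ring

lemma one_sub_exp_ge (t : ℝ) (ht : 0 < t) (ht1 : t ≤ 1) : t/2 ≤ 1 - exp (-t) := by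
  have h1 : 1 + t ≤ exp t := by linarith [Real.add_one_le_exp t]
  have h2 : exp (-t) ≤ (1+t)⁻¹ := by
    rw [Real.exp_neg]
    exact inv_anti₀ (by linarith) h1
  have h3 : (1+t)⁻¹ ≤ 1 - t/2 := by
    rw [inv_le_iff_one_le_mul₀ (by linarith : (0:ℝ) < 1+t)]
    nlinarith
  linarith

lemma E_bound (t : ℝ) (ht : 0 < t) (ht4 : t ≤ 1/4) :
    |phi4 t - 6/t^4 - 1/120| ≤ 48000000 * t := by
  have hv := one_sub_exp_ge t ht (by linarith)
  have h1v : 0 < 1 - exp (-t) := lt_of_lt_of_le (by positivity) hv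
  have hden : 0 < t^4 * (1 - exp (-t))^4 := by positivity
  rw [Ef_eq t ht, abs_div, abs_of_pos hden]
  have hnum := M_bound t ht ht4
  have hd2 : t^8/16 ≤ t^4 * (1 - exp (-t))^4 := by
    have : (t/2)^4 ≤ (1 - exp (-t))^4 := pow_le_pow_left₀ (by positivity) hv 4
    calc t^8/16 = t^4 * (t/2)^4 := by ring
      _ ≤ t^4 * (1 - exp (-t))^4 := by
          exact mul_le_mul_of_nonneg_left this (by positivity)
  calc |Mf t| / (t^4 * (1 - exp (-t))^4) ≤ (3000000 * t^9) / (t^8/16) :=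
        div_le_div₀ (by positivity) hnum (by positivity) hd2
    _ = 48000000 * t := by
        field_simp
        ring

lemma E_tendsto : Tendsto (fun t => phi4 t - 6/t^4 - 1/120) (𝓝[>] (0:ℝ)) (𝓝 0) := by
  have hg : Tendsto (fun t : ℝ => 48000000 * t) (𝓝[>] (0:ℝ)) (𝓝 0) := by
    have : Tendsto (fun t : ℝ => 48000000 * t) (𝓝 (0:ℝ)) (𝓝 (48000000 * 0)) :=
      (continuous_const.mul continuous_id).tendsto 0
    simpa using this.mono_left nhdsWithin_le_nhds
  apply squeeze_zero_norm' _ hg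
  have hmem : Ioc (0:ℝ) (1/4) ∈ 𝓝[>] (0:ℝ) :=
      Ioc_mem_nhdsGT_of_mem (by norm_num : (0:ℝ) ∈ Ico (0:ℝ) (1/4))
  filter_upwards [hmem] with t ht
  exact E_bound t ht.1 ht.2
end

noncomputable section
lemma mul_tendsto_Ioi (c : ℝ) (hc : 0 < c) :
    Tendsto (fun t : ℝ => c*t) (𝓝[>] (0:ℝ)) (𝓝[>] (0:ℝ)) := by
  apply tendsto_nhdsWithin_of_tendsto_nhds_of_eventually_within _
  · have : Tendsto (fun t : ℝ => c*t) (𝓝 (0:ℝ)) (𝓝 (c*0)) :=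
      (continuous_const.mul continuous_id).tendsto 0
    simpa using this.mono_left nhdsWithin_le_nhds
  · filter_upwards [self_mem_nhdsWithin] with x hx
    exact mul_pos hc hx

lemma h_tendsto_zero (c : ℝ) (hc : 0 < c) :
    Tendsto (fun t => phi4 t - c^4 * phi4 (c*t)) (𝓝[>] (0:ℝ)) (𝓝 ((1-c^4)/120)) := by
  have key : ∀ t ∈ Ioi (0:ℝ), (fun t => (phi4 t - 6/t^4 - 1/120)
      - c^4*(phi4 (c*t) - 6/(c*t)^4 - 1/120) + (1-c^4)/120) t
      = phi4 t - c^4 * phi4 (c*t) := by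
    intro t ht
    have ht0 : (t:ℝ) ≠ 0 := (ne_of_gt ht)
    have hc0 : c ≠ 0 := ne_of_gt hc
    have : (c*t)^4 = c^4 * t^4 := by ring
    field_simp [this]
    ring
  have base : Tendsto (fun t => (phi4 t - 6/t^4 - 1/120)
      - c^4*(phi4 (c*t) - 6/(c*t)^4 - 1/120) + (1-c^4)/120) (𝓝[>] (0:ℝ))
      (𝓝 ((0 - c^4*0) + (1-c^4)/120)) := by
    exact ((E_tendsto.sub ((E_tendsto.comp (mul_tendsto_Ioi c hc)).const_mul (c^4))).add_const _)
  have := base.congr' (eventually_of_mem self_mem_nhdsWithin key)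
  simpa using this

lemma phi_atTop : Tendsto (fun t => exp t * phi4 t) atTop (𝓝 1) := by
  have heq : ∀ t : ℝ, exp t * phi4 t = (1 + 4*exp (-t) + exp (-t)^2)/(1 - exp (-t))^4 := by
    intro t
    have hx : exp t * exp (-t) = 1 := by rw [← Real.exp_add]; simp
    rw [phi4, ← mul_div_assoc]
    congr 1
    rw [show exp t * (exp (-t) + 4*exp (-t)^2 + exp (-t)^3)
        = (exp t * exp (-t)) * (1 + 4*exp (-t) + exp (-t)^2) by ring, hx, one_mul]
  have hv : Tendsto (fun t : ℝ => exp (-t)) atTop (𝓝 0) := Real.tendsto_exp_neg_atTop_nhds_zero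
  have hcont : ContinuousAt (fun w : ℝ => (1 + 4*w + w^2)/(1 - w)^4) 0 := by
    apply ContinuousAt.div
    · fun_prop
    · fun_prop
    · norm_num
  have := hcont.tendsto.comp hv
  simp only [Function.comp_def] at this
  norm_num at this
  apply Tendsto.congr _ this
  intro t
  exact (heq t).symm

lemma phi_atTop_c (c : ℝ) (hc : 0 < c) :
    Tendsto (fun t => exp (c*t) * phi4 (c*t)) atTop (𝓝 1) := by
  exact phi_atTop.comp (Tendsto.const_mul_atTop hc tendsto_id)
end

section final
lemma G4_eq (c t : ℝ) : G4 c t = phi4 t - c^4 * phi4 (c*t) := by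
  rw [G4, ga4, ga4, phi4, phi4]
  ring

lemma exp_shift (c t : ℝ) : exp ((1-c)*t) * exp (c*t) = exp t := by
  rw [← Real.exp_add]; ring_nf

lemma hinf_gt (c : ℝ) (hc : 1 < c) :
    Tendsto (fun t => exp t * (phi4 t - c^4 * phi4 (c*t))) atTop (𝓝 1) := by
  have hc0 : 0 < c := by linarith
  have A := phi_atTop
  have B := phi_atTop_c c hc0
  have C : Tendsto (fun t : ℝ => exp ((1-c)*t)) atTop (𝓝 0) := by
    have h1 : Tendsto (fun t : ℝ => (c-1)*t) atTop atTop :=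
      Tendsto.const_mul_atTop (by linarith) tendsto_id
    have := Real.tendsto_exp_neg_atTop_nhds_zero.comp h1
    apply this.congr
    intro t
    simp only [Function.comp_apply]
    ring_nf
  have D : Tendsto (fun t => exp t * phi4 t
      - c^4 * (exp ((1-c)*t) * (exp (c*t) * phi4 (c*t)))) atTop (𝓝 (1 - c^4 * (0*1))) :=
    A.sub (((C.mul B)).const_mul (c^4))
  norm_num at D
  apply D.congr
  intro t
  have hs := exp_shift c t
  linear_combination (-(c^4 * phi4 (c*t))) * hs
lemma hinf_lt (c : ℝ) (hc0 : 0 < c) (hc : c < 1) :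
    Tendsto (fun t => exp (c*t) * (phi4 t - c^4 * phi4 (c*t))) atTop (𝓝 (-c^4)) := by
  have A := phi_atTop
  have B := phi_atTop_c c hc0
  have C : Tendsto (fun t : ℝ => exp ((c-1)*t)) atTop (𝓝 0) := by
    have h1 : Tendsto (fun t : ℝ => (1-c)*t) atTop atTop :=
      Tendsto.const_mul_atTop (by linarith) tendsto_id
    have := Real.tendsto_exp_neg_atTop_nhds_zero.comp h1
    apply this.congr
    intro t
    simp only [Function.comp_apply]
    ring_nf
  have D : Tendsto (fun t => exp ((c-1)*t) * (exp t * phi4 t)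
      - c^4 * (exp (c*t) * phi4 (c*t))) atTop (𝓝 (0*1 - c^4 * 1)) :=
    (C.mul A).sub (B.const_mul (c^4))
  norm_num at D
  apply D.congr
  intro t
  have hs : exp ((c-1)*t) * exp t = exp (c*t) := by rw [← Real.exp_add]; ring_nf
  linear_combination (phi4 t) * hs
end final

theorem stmt19 (α β : ℝ) (hab : α < β) (h1 : β - α ≠ 1) (h01 : (α, β) ≠ (0, 1)) :
    (∃ t₁ ∈ Set.Ioi (0:ℝ), 0 < iteratedDeriv 4 (fun t => Real.log ((fun t : ℝ => if t = 0 then β - α else (Real.exp (-α*t) - Real.exp (-β*t)) / (1 - Real.exp (-t))) t)) t₁) ∧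
    (∃ t₂ ∈ Set.Ioi (0:ℝ), iteratedDeriv 4 (fun t => Real.log ((fun t : ℝ => if t = 0 then β - α else (Real.exp (-α*t) - Real.exp (-β*t)) / (1 - Real.exp (-t))) t)) t₂ < 0) := by
  set F : ℝ → ℝ := fun t => Real.log ((fun t : ℝ => if t = 0 then β - α else
    (Real.exp (-α*t) - Real.exp (-β*t)) / (1 - Real.exp (-t))) t) with hF
  set c : ℝ := β - α with hcdef
  have hc0 : 0 < c := by simp [hcdef]; linarith
  have hc1 : c ≠ 1 := h1
  clear_value c
  -- F agrees with G0 α c on Ioi 0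
  have Feq : ∀ s ∈ Ioi (0:ℝ), F s = G0 α c s := by
    intro s hs
    have hs0 : s ≠ 0 := ne_of_gt hs
    have hcs : 0 < c*s := mul_pos hc0 hs
    have h2 : 0 < 1 - exp (-(c*s)) := by
      have : exp (-(c*s)) < 1 := Real.exp_lt_one_iff.mpr (by linarith)
      linarith
    have hs' : (0:ℝ) < s := hs
    have h3 : 0 < 1 - exp (-s) := by
      have : exp (-s) < 1 := Real.exp_lt_one_iff.mpr (by linarith)
      linarith
    have num_eq : exp (-α*s) - exp (-β*s) = exp (-α*s) * (1 - exp (-(c*s))) := by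
      rw [mul_sub, mul_one, ← Real.exp_add]
      congr 2
      rw [hcdef]; ring
    rw [hF]
    simp only [if_neg hs0]
    rw [num_eq, Real.log_div (by positivity) (ne_of_gt h3), Real.log_mul (by positivity) (ne_of_gt h2),
      Real.log_exp, G0]
    ring
  have hiter : ∀ t ∈ Ioi (0:ℝ), iteratedDeriv 4 F t = phi4 t - c^4 * phi4 (c*t) := by
    intro t ht
    have hev : F =ᶠ[𝓝 t] G0 α c :=
      eventually_of_mem (isOpen_Ioi.mem_nhds ht) (fun s hs => Feq s hs)
    rw [hev.iteratedDeriv_eq 4, iter4 α c (ne_of_gt hc0) t (ne_of_gt ht), G4_eq]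
  have hzero := h_tendsto_zero c hc0
  rcases lt_or_gt_of_ne hc1 with hlt | hgt
  · -- c < 1 : positive near 0, negative at infinity
    constructor
    · have hpos : (0:ℝ) < (1-c^4)/120 := by
        have h2 : c^2 < 1 := by nlinarith
        have : c^4 < 1 := by nlinarith
        linarith
      have ev := hzero.eventually_const_lt hpos
      obtain ⟨t, htpos, hgt0⟩ := (eventually_mem_nhdsWithin.and ev).exists
      exact ⟨t, htpos, by rw [hiter t htpos]; exact hgt0⟩
    · have hneg := hinf_lt c hc0 hlt
      have ev := hneg.eventually_lt_const (by nlinarith [pow_pos hc0 4] : -c^4 < (0:ℝ)) |>.and (eventually_gt_atTop 0)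
      obtain ⟨t, hlt0, htpos⟩ := ev.exists
      refine ⟨t, htpos, ?_⟩
      rw [hiter t htpos]
      have he := Real.exp_pos (c*t)
      nlinarith
  · -- c > 1 : negative near 0, positive at infinity
    constructor
    · have hpos := hinf_gt c hgt
      have ev := hpos.eventually_const_lt (by norm_num : (0:ℝ) < 1) |>.and (eventually_gt_atTop 0)
      obtain ⟨t, hgt0, htpos⟩ := ev.exists
      refine ⟨t, htpos, ?_⟩
      rw [hiter t htpos]
      have he := Real.exp_pos t
      nlinarith
    · have hneg : (1-c^4)/120 < 0 := by
        have h2 : 1 < c^2 := by nlinarith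
        have : 1 < c^4 := by nlinarith
        linarith
      have ev := hzero.eventually_lt_const hneg
      obtain ⟨t, htpos, hlt0⟩ := (eventually_mem_nhdsWithin.and ev).exists
      exact ⟨t, htpos, by rw [hiter t htpos]; exact hlt0⟩
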